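/- For every positive integer p, the number of nonempty ordered sequences of distinct elements from a set of size p equals ∑_{j=1}^{p} p!/(p-j)!, and this quantity equals ⌊p! · e⌋ − 1. -/

import Mathlib

open Finset

lemma floor_fact_exp (p : ℕ) (hp : 1 ≤ p) :
    ⌊(p.factorial : ℝ) * Real.exp 1⌋₊ =
      ∑ i ∈ range (p + 1), p.factorial / i.factorial := by
  set S : ℝ := ∑ i ∈ range (p + 1), (1:ℝ) ^ i / i.factorial with hS
  have hdvd : ∀ i ∈ range (p + 1), i.factorial ∣ p.factorial := fun i hi =>
    Nat.factorial_dvd_factorial (by simpa using Nat.lt_succ_iff.mp (mem_range.mp hi))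
  have hN : ((∑ i ∈ range (p + 1), p.factorial / i.factorial : ℕ) : ℝ)
      = (p.factorial : ℝ) * S := by
    rw [Nat.cast_sum, hS, Finset.mul_sum]
    refine Finset.sum_congr rfl fun i hi => ?_
    rw [Nat.cast_div (hdvd i hi) (by positivity)]
    field_simp
    exact (one_pow i).symm
  have hlow : S < Real.exp 1 := by
    have h := Real.sum_le_exp_of_nonneg (by norm_num : (0:ℝ) ≤ 1) (p + 2)
    rw [Finset.sum_range_succ] at h
    have : (0:ℝ) < 1 ^ (p+1) / (p+1).factorial := by positivity
    linarith
  have hup : Real.exp 1 - S ≤ ((p+1).succ : ℝ) / ((p+1).factorial * ((p+1:ℕ):ℝ)) := by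
    have h := Real.exp_bound (x := 1) (by norm_num) (n := p + 1) (by omega)
    rw [abs_one, one_pow, one_mul, ← hS] at h
    exact (abs_sub_le_iff.mp h).1
  have hru : (p.factorial : ℝ) * Real.exp 1 - (p.factorial : ℝ) * S < 1 := by
    have h1 : (p.factorial : ℝ) * (Real.exp 1 - S)
        ≤ (p.factorial : ℝ) * (((p+1).succ : ℝ) / ((p+1).factorial * ((p+1:ℕ):ℝ))) :=
      mul_le_mul_of_nonneg_left hup (by positivity)
    have h2 : (p.factorial : ℝ) * (((p+1).succ : ℝ) / ((p+1).factorial * ((p+1:ℕ):ℝ))) < 1 := by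
      rw [Nat.factorial_succ, mul_div_assoc']
      push_cast
      rw [div_lt_one (by positivity)]
      have hp1 : (1:ℝ) ≤ (p:ℝ) := by exact_mod_cast hp
      have hf : (0:ℝ) < (p.factorial : ℝ) := by positivity
      have key : (p:ℝ)+1+1 < ((p:ℝ)+1)*((p:ℝ)+1) := by nlinarith
      nlinarith [mul_lt_mul_of_pos_left key hf]
    nlinarith
  rw [Nat.floor_eq_iff (by positivity)]
  constructor
  · rw [hN]
    have : (0:ℝ) < (p.factorial : ℝ) * (Real.exp 1 - S) :=
      mul_pos (by positivity) (by linarith)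
    nlinarith
  · rw [hN]; linarith

theorem count_nonempty_injective_sequences (p : ℕ) (hp : 1 ≤ p) :
    (∑ j ∈ Finset.Icc 1 p, Fintype.card (Fin j ↪ Fin p)) =
      ∑ j ∈ Finset.Icc 1 p, p.factorial / (p - j).factorial ∧
    (∑ j ∈ Finset.Icc 1 p, p.factorial / (p - j).factorial) =
      ⌊(p.factorial : ℝ) * Real.exp 1⌋₊ - 1 := by
  constructor
  · refine Finset.sum_congr rfl fun j hj => ?_
    rw [Fintype.card_embedding_eq, Fintype.card_fin, Fintype.card_fin,
      Nat.descFactorial_eq_div (mem_Icc.mp hj).2]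
  · rw [floor_fact_exp p hp]
    have h1 : ∑ j ∈ Finset.Icc 1 p, p.factorial / (p - j).factorial
        = ∑ k ∈ range p, p.factorial / k.factorial := by
      refine Finset.sum_nbij' (fun j => p - j) (fun k => p - k) ?_ ?_ ?_ ?_ ?_
      · intro j hj; simp only [mem_Icc] at hj; simp only [mem_range]; omega
      · intro k hk; simp only [mem_range] at hk; simp only [mem_Icc]; omega
      · intro j hj; simp only [mem_Icc] at hj; show p - (p - j) = j; omega
      · intro k hk; simp only [mem_range] at hk; show p - (p - k) = k; omega
      · intro j hj; rfl
    rw [h1, Finset.sum_range_succ, Nat.div_self p.factorial_pos]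
    omega
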